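/- If A ∈ ℝ^{n×n} is a symmetric circulant matrix with first column a, then Ȟ⁺·A·Ȟ⁺ = Ȟ⁻·A·Ȟ⁻ = Λ, where Λ is the diagonal matrix Λ = √n·Diag(Ȟ_c·a); moreover √n·Ȟ⁺·a = √n·Ȟ⁻·a = √n·Ȟ_c·a, so all three formulas for the diagonal agree. -/

import Mathlib

open Matrix Real

/-- The node-centered cosine matrix `(Ȟ_c)_{j,k} = n^{−1/2}·cos(2jkπ/n)`. -/
noncomputable def Hc (n : ℕ) : Matrix (Fin n) (Fin n) ℝ :=
  fun j k => Real.cos (2 * (j.val : ℝ) * (k.val : ℝ) * Real.pi / n) / Real.sqrt n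

/-- The node-centered sine matrix `(Ȟ_s)_{j,k} = n^{−1/2}·sin(2jkπ/n)`. -/
noncomputable def Hs (n : ℕ) : Matrix (Fin n) (Fin n) ℝ :=
  fun j k => Real.sin (2 * (j.val : ℝ) * (k.val : ℝ) * Real.pi / n) / Real.sqrt n

/-- The node-centered Hartley matrix `Ȟ⁺ = Ȟ_c + Ȟ_s`. -/
noncomputable def Hp (n : ℕ) : Matrix (Fin n) (Fin n) ℝ := Hc n + Hs n

/-- The node-centered Hartley matrix `Ȟ⁻ = Ȟ_c − Ȟ_s`. -/
noncomputable def Hm (n : ℕ) : Matrix (Fin n) (Fin n) ℝ := Hc n - Hs n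

section HartleyAux
open Finset

noncomputable def Cf (n c : ℕ) (t : ℤ) : ℝ := Real.cos (2 * Real.pi * c * t / n)
noncomputable def Sf (n c : ℕ) (t : ℤ) : ℝ := Real.sin (2 * Real.pi * c * t / n)



lemma sum_exp_aux (n : ℕ) [NeZero n] (m : ℤ) :
    ∑ k : Fin n, Complex.exp (2 * Real.pi * Complex.I * m * k / n) =
      if (n : ℤ) ∣ m then (n : ℂ) else 0 := by
  have hn : (n : ℂ) ≠ 0 := Nat.cast_ne_zero.mpr (NeZero.ne n)
  set z : ℂ := Complex.exp (2 * Real.pi * Complex.I * m / n) with hz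
  have hzk : ∀ k : Fin n, Complex.exp (2 * Real.pi * Complex.I * m * k / n) = z ^ (k : ℕ) := by
    intro k
    rw [hz, ← Complex.exp_nat_mul]
    congr 1
    push_cast
    ring
  simp only [hzk]
  by_cases h : (n : ℤ) ∣ m
  · obtain ⟨q, rfl⟩ := h
    have hz1 : z = 1 := by
      rw [hz, show ((((n:ℤ) * q : ℤ)) : ℂ) = (n:ℂ) * (q:ℂ) by push_cast; ring,
        show 2 * (Real.pi:ℂ) * Complex.I * ((n:ℂ) * q) / n = (q : ℤ) * (2 * Real.pi * Complex.I) by push_cast; field_simp]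
      exact Complex.exp_int_mul_two_pi_mul_I q
    simp [hz1]
  · have hz1 : z ≠ 1 := by
      intro hc
      rw [hz, Complex.exp_eq_one_iff] at hc
      obtain ⟨k, hk⟩ := hc
      apply h
      refine ⟨k, ?_⟩
      have h2 : (2 * (Real.pi:ℂ) * Complex.I) ≠ 0 := by
        simp [Real.pi_ne_zero, Complex.I_ne_zero]
      field_simp at hk
      have : (m : ℂ) = (n : ℂ) * k := hk
      exact_mod_cast this
    rw [Fin.sum_univ_eq_sum_range (fun k => z ^ k), geom_sum_eq hz1]
    have hzn : z ^ n = 1 := by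
      rw [hz, ← Complex.exp_nat_mul,
        show (n:ℂ) * (2 * Real.pi * Complex.I * m / n) = (m:ℤ) * (2 * Real.pi * Complex.I) by push_cast; field_simp]
      exact Complex.exp_int_mul_two_pi_mul_I m
    simp [hzn, h]



lemma sum_cos_aux (n : ℕ) [NeZero n] (m : ℤ) :
    ∑ k : Fin n, Real.cos (2 * Real.pi * m * k / n) =
      if (n : ℤ) ∣ m then (n : ℝ) else 0 := by
  have h := sum_exp_aux n m
  have h2 : ∀ k : Fin n, Complex.exp (2 * Real.pi * Complex.I * m * k / n)
      = Complex.exp ((2 * Real.pi * m * k / n : ℝ) * Complex.I) := by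
    intro k; congr 1; push_cast; ring
  simp only [h2] at h
  have := congrArg Complex.re h
  simp only [Complex.re_sum, Complex.exp_ofReal_mul_I_re, apply_ite Complex.re,
    Complex.natCast_re, Complex.zero_re] at this
  exact this

lemma sum_sin_aux (n : ℕ) [NeZero n] (m : ℤ) :
    ∑ k : Fin n, Real.sin (2 * Real.pi * m * k / n) = 0 := by
  have h := sum_exp_aux n m
  have h2 : ∀ k : Fin n, Complex.exp (2 * Real.pi * Complex.I * m * k / n)
      = Complex.exp ((2 * Real.pi * m * k / n : ℝ) * Complex.I) := by
    intro k; congr 1; push_cast; ring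
  simp only [h2] at h
  have := congrArg Complex.im h
  simp only [Complex.im_sum, Complex.exp_ofReal_mul_I_im, apply_ite Complex.im,
    Complex.natCast_im, Complex.zero_im, ite_self] at this
  exact this


lemma cos_congr_aux (n : ℕ) [NeZero n] (c : ℕ) {t t' : ℤ} (h : (n : ℤ) ∣ t - t') :
    Real.cos (2 * Real.pi * c * t / n) = Real.cos (2 * Real.pi * c * t' / n) := by
  obtain ⟨q, hq⟩ := h
  have hn : (n : ℝ) ≠ 0 := Nat.cast_ne_zero.mpr (NeZero.ne n)
  have ht : (t : ℝ) = t' + n * q := by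
    have : t = t' + n * q := by omega
    exact_mod_cast congrArg (Int.cast : ℤ → ℝ) this
  rw [ht, show 2 * Real.pi * c * ((t':ℝ) + n * q) / n
      = 2 * Real.pi * c * t' / n + ((c : ℤ) * q : ℤ) * (2 * Real.pi) by push_cast; field_simp,
    Real.cos_add_int_mul_two_pi]

lemma sin_congr_aux (n : ℕ) [NeZero n] (c : ℕ) {t t' : ℤ} (h : (n : ℤ) ∣ t - t') :
    Real.sin (2 * Real.pi * c * t / n) = Real.sin (2 * Real.pi * c * t' / n) := by
  obtain ⟨q, hq⟩ := h
  have hn : (n : ℝ) ≠ 0 := Nat.cast_ne_zero.mpr (NeZero.ne n)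
  have ht : (t : ℝ) = t' + n * q := by
    have : t = t' + n * q := by omega
    exact_mod_cast congrArg (Int.cast : ℤ → ℝ) this
  rw [ht, show 2 * Real.pi * c * ((t':ℝ) + n * q) / n
      = 2 * Real.pi * c * t' / n + ((c : ℤ) * q : ℤ) * (2 * Real.pi) by push_cast; field_simp,
    Real.sin_add_int_mul_two_pi]

lemma fin_sub_dvd (n : ℕ) [NeZero n] (a b : Fin n) :
    (n : ℤ) ∣ ((((a - b : Fin n) : ℕ) : ℤ) - ((a : ℤ) - (b : ℤ))) := by
  have hb : (b : ℕ) ≤ n := b.isLt.le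
  have h : ((a - b : Fin n) : ℕ) = (n - (b : ℕ) + a) % n := by rw [Fin.sub_def]
  refine ⟨1 - (((n - (b : ℕ) + a) / n : ℕ) : ℤ), ?_⟩
  rw [h]
  have e1 := congrArg (Nat.cast : ℕ → ℤ) (Nat.mod_add_div (n - (b : ℕ) + a) n)
  push_cast [Nat.cast_sub hb] at e1 ⊢
  linear_combination e1

lemma Cf_congr (n : ℕ) [NeZero n] (c : ℕ) {t t' : ℤ} (h : (n : ℤ) ∣ t - t') :
    Cf n c t = Cf n c t' := cos_congr_aux n c h
lemma Sf_congr (n : ℕ) [NeZero n] (c : ℕ) {t t' : ℤ} (h : (n : ℤ) ∣ t - t') :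
    Sf n c t = Sf n c t' := sin_congr_aux n c h

lemma Cf_sub (n c : ℕ) (s t : ℤ) :
    Cf n c (s - t) = Cf n c s * Cf n c t + Sf n c s * Sf n c t := by
  unfold Cf Sf
  rw [show 2 * Real.pi * c * ((s - t : ℤ) : ℝ) / n
      = 2 * Real.pi * c * s / n - 2 * Real.pi * c * t / n by push_cast; ring, Real.cos_sub]

lemma Sf_sub (n c : ℕ) (s t : ℤ) :
    Sf n c (s - t) = Sf n c s * Cf n c t - Cf n c s * Sf n c t := by
  unfold Cf Sf
  rw [show 2 * Real.pi * c * ((s - t : ℤ) : ℝ) / n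
      = 2 * Real.pi * c * s / n - 2 * Real.pi * c * t / n by push_cast; ring, Real.sin_sub]

lemma Sf_neg (n c : ℕ) (t : ℤ) : Sf n c (-t) = -Sf n c t := by
  unfold Sf
  rw [show 2 * Real.pi * c * ((-t : ℤ) : ℝ) / n = -(2 * Real.pi * c * t / n) by push_cast; ring,
    Real.sin_neg]

end HartleyAux

open Finset in
/-- For a symmetric circulant `A` with first column `a`:
`Ȟ⁺·A·Ȟ⁺ = Ȟ⁻·A·Ȟ⁻ = Λ` with `Λ = √n·Diag(Ȟ_c·a)`; moreover
`√n·Ȟ⁺·a = √n·Ȟ⁻·a = √n·Ȟ_c·a`. -/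
theorem symm_circulant_diag_node_hartley (n : ℕ) [NeZero n] (a : Fin n → ℝ)
    (A : Matrix (Fin n) (Fin n) ℝ)
    (hA : ∀ j k : Fin n, A j k = a (j - k))
    (ha : ∀ i : Fin n, a (-i) = a i) :
    Hp n * A * Hp n = Real.sqrt n • Matrix.diagonal ((Hc n).mulVec a) ∧
    Hm n * A * Hm n = Real.sqrt n • Matrix.diagonal ((Hc n).mulVec a) ∧
    Real.sqrt n • (Hp n).mulVec a = Real.sqrt n • (Hc n).mulVec a ∧
    Real.sqrt n • (Hm n).mulVec a = Real.sqrt n • (Hc n).mulVec a := by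
  have hn0 : 0 < n := Nat.pos_of_ne_zero (NeZero.ne n)
  have hnR : (0:ℝ) < n := by exact_mod_cast hn0
  have hsq : (0:ℝ) < Real.sqrt n := Real.sqrt_pos.mpr hnR
  have hsqsq : Real.sqrt n * Real.sqrt n = (n:ℝ) := Real.mul_self_sqrt (by positivity)
  set lam : Fin n → ℝ := fun j => ∑ t : Fin n, Cf n j ((t : ℕ) : ℤ) * a t with hlam
  -- entry lemmas
  have hHc : ∀ j k : Fin n, Hc n j k = Cf n (j : ℕ) ((k : ℕ) : ℤ) / Real.sqrt n := by
    intro j k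
    simp only [Hc, Cf]
    rw [show 2 * Real.pi * ((j:ℕ):ℝ) * (((k:ℕ):ℤ):ℝ) / n = 2 * (j.val : ℝ) * (k.val : ℝ) * Real.pi / n by push_cast; ring]
  have hHc' : ∀ j k : Fin n, Hc n j k = Cf n (k : ℕ) ((j : ℕ) : ℤ) / Real.sqrt n := by
    intro j k
    simp only [Hc, Cf]
    rw [show 2 * Real.pi * ((k:ℕ):ℝ) * (((j:ℕ):ℤ):ℝ) / n = 2 * (j.val : ℝ) * (k.val : ℝ) * Real.pi / n by push_cast; ring]
  have hHs : ∀ j k : Fin n, Hs n j k = Sf n (j : ℕ) ((k : ℕ) : ℤ) / Real.sqrt n := by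
    intro j k
    simp only [Hs, Sf]
    rw [show 2 * Real.pi * ((j:ℕ):ℝ) * (((k:ℕ):ℤ):ℝ) / n = 2 * (j.val : ℝ) * (k.val : ℝ) * Real.pi / n by push_cast; ring]
  have hHs' : ∀ j k : Fin n, Hs n j k = Sf n (k : ℕ) ((j : ℕ) : ℤ) / Real.sqrt n := by
    intro j k
    simp only [Hs, Sf]
    rw [show 2 * Real.pi * ((k:ℕ):ℝ) * (((j:ℕ):ℤ):ℝ) / n = 2 * (j.val : ℝ) * (k.val : ℝ) * Real.pi / n by push_cast; ring]
  -- mu = 0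
  have hmu : ∀ j : Fin n, ∑ t : Fin n, Sf n (j : ℕ) ((t : ℕ) : ℤ) * a t = 0 := by
    intro j
    have h1 : ∑ t : Fin n, Sf n (j : ℕ) ((t : ℕ) : ℤ) * a t
        = ∑ t : Fin n, Sf n (j : ℕ) (((-t : Fin n) : ℕ) : ℤ) * a (-t) := by
      rw [← Equiv.sum_comp (Equiv.neg (Fin n)) (fun t => Sf n (j : ℕ) ((t : ℕ) : ℤ) * a t)]
      simp only [Equiv.neg_apply]
    have h2 : ∀ t : Fin n, Sf n (j : ℕ) (((-t : Fin n) : ℕ) : ℤ) * a (-t)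
        = -(Sf n (j : ℕ) ((t : ℕ) : ℤ) * a t) := by
      intro t
      have hd : (n : ℤ) ∣ ((((-t : Fin n) : ℕ) : ℤ) - (-(t : ℤ))) := by
        simpa [zero_sub] using fin_sub_dvd n 0 t
      rw [Sf_congr n (j : ℕ) hd, Sf_neg, ha, neg_mul]
    have h4 : ∑ t : Fin n, Sf n (j : ℕ) (((-t : Fin n) : ℕ) : ℤ) * a (-t)
        = -∑ t : Fin n, Sf n (j : ℕ) ((t : ℕ) : ℤ) * a t := by
      simp only [h2]
      rw [Finset.sum_neg_distrib]
    rw [h4] at h1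
    linarith
  -- eigenrelations
  have eigenC : A * Hc n = Hc n * Matrix.diagonal lam := by
    ext k j
    rw [Matrix.mul_apply, Matrix.mul_diagonal]
    calc ∑ m : Fin n, A k m * Hc n m j
        = ∑ m : Fin n, a (k - m) * (Cf n (j : ℕ) ((m : ℕ) : ℤ) / Real.sqrt n) := by
          refine Finset.sum_congr rfl fun m _ => ?_; rw [hA, hHc']
      _ = ∑ t : Fin n, a (k - (k - t)) * (Cf n (j : ℕ) (((k - t : Fin n) : ℕ) : ℤ) / Real.sqrt n) := by
          rw [← Equiv.sum_comp (Equiv.subLeft k) (fun m => a (k - m) * (Cf n (j : ℕ) ((m : ℕ) : ℤ) / Real.sqrt n))]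
          simp only [Equiv.subLeft_apply]
      _ = ∑ t : Fin n, (Cf n (j:ℕ) ((k:ℕ):ℤ) * (Cf n (j:ℕ) ((t:ℕ):ℤ) * a t)
            + Sf n (j:ℕ) ((k:ℕ):ℤ) * (Sf n (j:ℕ) ((t:ℕ):ℤ) * a t)) / Real.sqrt n := by
          refine Finset.sum_congr rfl fun t _ => ?_
          rw [sub_sub_cancel, Cf_congr n (j : ℕ) (fin_sub_dvd n k t), Cf_sub]
          ring
      _ = (Cf n (j:ℕ) ((k:ℕ):ℤ) * (∑ t : Fin n, Cf n (j:ℕ) ((t:ℕ):ℤ) * a t)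
            + Sf n (j:ℕ) ((k:ℕ):ℤ) * (∑ t : Fin n, Sf n (j:ℕ) ((t:ℕ):ℤ) * a t)) / Real.sqrt n := by
          rw [← Finset.sum_div, Finset.sum_add_distrib, ← Finset.mul_sum, ← Finset.mul_sum]
      _ = Hc n k j * lam j := by
          rw [hmu j, mul_zero, add_zero, hHc' k j, hlam]
          ring
  have eigenS : A * Hs n = Hs n * Matrix.diagonal lam := by
    ext k j
    rw [Matrix.mul_apply, Matrix.mul_diagonal]
    calc ∑ m : Fin n, A k m * Hs n m j
        = ∑ m : Fin n, a (k - m) * (Sf n (j : ℕ) ((m : ℕ) : ℤ) / Real.sqrt n) := by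
          refine Finset.sum_congr rfl fun m _ => ?_; rw [hA, hHs']
      _ = ∑ t : Fin n, a (k - (k - t)) * (Sf n (j : ℕ) (((k - t : Fin n) : ℕ) : ℤ) / Real.sqrt n) := by
          rw [← Equiv.sum_comp (Equiv.subLeft k) (fun m => a (k - m) * (Sf n (j : ℕ) ((m : ℕ) : ℤ) / Real.sqrt n))]
          simp only [Equiv.subLeft_apply]
      _ = ∑ t : Fin n, (Sf n (j:ℕ) ((k:ℕ):ℤ) * (Cf n (j:ℕ) ((t:ℕ):ℤ) * a t)
            - Cf n (j:ℕ) ((k:ℕ):ℤ) * (Sf n (j:ℕ) ((t:ℕ):ℤ) * a t)) / Real.sqrt n := by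
          refine Finset.sum_congr rfl fun t _ => ?_
          rw [sub_sub_cancel, Sf_congr n (j : ℕ) (fin_sub_dvd n k t), Sf_sub]
          ring
      _ = (Sf n (j:ℕ) ((k:ℕ):ℤ) * (∑ t : Fin n, Cf n (j:ℕ) ((t:ℕ):ℤ) * a t)
            - Cf n (j:ℕ) ((k:ℕ):ℤ) * (∑ t : Fin n, Sf n (j:ℕ) ((t:ℕ):ℤ) * a t)) / Real.sqrt n := by
          rw [← Finset.sum_div, Finset.sum_sub_distrib, ← Finset.mul_sum, ← Finset.mul_sum]
      _ = Hs n k j * lam j := by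
          rw [hmu j, mul_zero, sub_zero, hHs' k j, hlam]
          ring
  have eigenP : A * Hp n = Hp n * Matrix.diagonal lam := by
    rw [Hp, Matrix.mul_add, Matrix.add_mul, eigenC, eigenS]
  have eigenM : A * Hm n = Hm n * Matrix.diagonal lam := by
    rw [Hm, Matrix.mul_sub, Matrix.sub_mul, eigenC, eigenS]
  -- dvd iff
  have hdvd : ∀ j l : Fin n, ((n:ℤ) ∣ ((j:ℕ):ℤ) - ((l:ℕ):ℤ)) ↔ j = l := by
    intro j l
    constructor
    · intro hd
      have hj := j.isLt; have hl := l.isLt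
      have h0 : ((j:ℕ):ℤ) - ((l:ℕ):ℤ) = 0 := Int.eq_zero_of_abs_lt_dvd hd (by
        rw [abs_lt]; omega)
      exact Fin.ext (by omega)
    · rintro rfl; simp
  -- Hp * Hp = 1
  have HpHp : Hp n * Hp n = 1 := by
    ext j l
    rw [Matrix.mul_apply]
    have key : ∀ k : Fin n, Hp n j k * Hp n k l =
        (Real.cos (2 * Real.pi * ((((j:ℕ):ℤ) - ((l:ℕ):ℤ) : ℤ)) * k / n)
          + Real.sin (2 * Real.pi * ((((j:ℕ):ℤ) + ((l:ℕ):ℤ) : ℤ)) * k / n)) / n := by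
      intro k
      simp only [Hp, Matrix.add_apply, Hc, Hs]
      rw [← add_div, ← add_div, div_mul_div_comm, hsqsq]
      congr 1
      rw [show 2 * Real.pi * (((((j:ℕ):ℤ) - ((l:ℕ):ℤ) : ℤ)):ℝ) * ((k:ℕ):ℝ) / n
            = 2 * (j.val:ℝ) * (k.val:ℝ) * Real.pi / n - 2 * (k.val:ℝ) * (l.val:ℝ) * Real.pi / n by push_cast; ring,
        show 2 * Real.pi * (((((j:ℕ):ℤ) + ((l:ℕ):ℤ) : ℤ)):ℝ) * ((k:ℕ):ℝ) / n
            = 2 * (j.val:ℝ) * (k.val:ℝ) * Real.pi / n + 2 * (k.val:ℝ) * (l.val:ℝ) * Real.pi / n by push_cast; ring,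
        Real.cos_sub, Real.sin_add]
      ring
    rw [Finset.sum_congr rfl (fun k _ => key k), ← Finset.sum_div, Finset.sum_add_distrib,
      sum_cos_aux n (((j:ℕ):ℤ) - ((l:ℕ):ℤ)), sum_sin_aux n (((j:ℕ):ℤ) + ((l:ℕ):ℤ)), add_zero]
    by_cases hjl : j = l
    · subst hjl
      simp [Matrix.one_apply, hdvd, hnR.ne']
    · rw [if_neg (fun hd => hjl ((hdvd j l).mp hd)), Matrix.one_apply_ne hjl, zero_div]
  have HmHm : Hm n * Hm n = 1 := by
    ext j l
    rw [Matrix.mul_apply]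
    have key : ∀ k : Fin n, Hm n j k * Hm n k l =
        (Real.cos (2 * Real.pi * ((((j:ℕ):ℤ) - ((l:ℕ):ℤ) : ℤ)) * k / n)
          - Real.sin (2 * Real.pi * ((((j:ℕ):ℤ) + ((l:ℕ):ℤ) : ℤ)) * k / n)) / n := by
      intro k
      simp only [Hm, Matrix.sub_apply, Hc, Hs]
      rw [div_sub_div_same, div_sub_div_same, div_mul_div_comm, hsqsq]
      congr 1
      rw [show 2 * Real.pi * (((((j:ℕ):ℤ) - ((l:ℕ):ℤ) : ℤ)):ℝ) * ((k:ℕ):ℝ) / n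
            = 2 * (j.val:ℝ) * (k.val:ℝ) * Real.pi / n - 2 * (k.val:ℝ) * (l.val:ℝ) * Real.pi / n by push_cast; ring,
        show 2 * Real.pi * (((((j:ℕ):ℤ) + ((l:ℕ):ℤ) : ℤ)):ℝ) * ((k:ℕ):ℝ) / n
            = 2 * (j.val:ℝ) * (k.val:ℝ) * Real.pi / n + 2 * (k.val:ℝ) * (l.val:ℝ) * Real.pi / n by push_cast; ring,
        Real.cos_sub, Real.sin_add]
      ring
    rw [Finset.sum_congr rfl (fun k _ => key k), ← Finset.sum_div, Finset.sum_sub_distrib,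
      sum_cos_aux n (((j:ℕ):ℤ) - ((l:ℕ):ℤ)), sum_sin_aux n (((j:ℕ):ℤ) + ((l:ℕ):ℤ)), sub_zero]
    by_cases hjl : j = l
    · subst hjl
      simp [Matrix.one_apply, hdvd, hnR.ne']
    · rw [if_neg (fun hd => hjl ((hdvd j l).mp hd)), Matrix.one_apply_ne hjl, zero_div]
  -- lam vs mulVec
  have hl : lam = Real.sqrt n • ((Hc n).mulVec a) := by
    funext j
    rw [hlam]
    simp only [Pi.smul_apply, smul_eq_mul, Matrix.mulVec, dotProduct, Finset.mul_sum]
    refine Finset.sum_congr rfl fun t _ => ?_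
    rw [hHc j t]
    field_simp
  -- Hs * a = 0
  have hHsa : (Hs n).mulVec a = 0 := by
    funext j
    have he : ∀ t : Fin n, Hs n j t * a t = (Sf n (j:ℕ) ((t:ℕ):ℤ) * a t) / Real.sqrt n :=
      fun t => by rw [hHs]; ring
    simp only [Matrix.mulVec, dotProduct, he, Pi.zero_apply]
    rw [← Finset.sum_div, hmu j, zero_div]
  refine ⟨?_, ?_, ?_, ?_⟩
  · rw [Matrix.mul_assoc, eigenP, ← Matrix.mul_assoc, HpHp, one_mul, hl, Matrix.diagonal_smul]
  · rw [Matrix.mul_assoc, eigenM, ← Matrix.mul_assoc, HmHm, one_mul, hl, Matrix.diagonal_smul]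
  · rw [Hp, Matrix.add_mulVec, hHsa, add_zero]
  · rw [Hm, Matrix.sub_mulVec, hHsa, sub_zero]
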